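/- Let M ⊆ B(H) with H finite dimensional, and let p ∈ M ⊗ M (with the Φ action Φ_{x⊗y}(T) = xTy) be an idempotent whose image under Φ is an idempotent operator on B(H) projecting onto a subspace S along a complement. Then Ann(S) = (M ⊗ M^op)(1 − p) and Ann(ker Φ_p) = (M ⊗ M^op) p, where Ann(X) = {z : Φ_z(X) = 0}. -/

import Mathlib

open TensorProduct Matrix MulOpposite

/-- The algebra homomorphism `Φ : M ⊗ M^op → End(B(H))`, `Φ_{x ⊗ y}(T) = x T y`,
for a `*`-subalgebra `M ⊆ B(H)` with `H` finite dimensional. -/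
noncomputable def PhiOp {n : Type*} [Fintype n] [DecidableEq n]
    (M : Subalgebra ℂ (Matrix n n ℂ)) :
    (↥M ⊗[ℂ] (↥M)ᵐᵒᵖ) →ₗ[ℂ] Matrix n n ℂ →ₗ[ℂ] Matrix n n ℂ :=
  TensorProduct.lift
  { toFun := fun x =>
      { toFun := fun y =>
          (LinearMap.mulLeft ℂ (x : Matrix n n ℂ)).comp
            (LinearMap.mulRight ℂ ((unop y : ↥M) : Matrix n n ℂ))
        map_add' := fun y₁ y₂ => by
          ext T
          simp [Matrix.mul_add]
        map_smul' := fun c y => by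
          ext T
          simp [Matrix.mul_smul] }
    map_add' := fun x₁ x₂ => by
      ext y T
      simp [Matrix.add_mul]
    map_smul' := fun c x => by
      ext y T
      simp [smul_mul_assoc] }

set_option synthInstance.maxHeartbeats 1000000
set_option maxHeartbeats 2000000

noncomputable def PhiFull (n : Type*) [Fintype n] [DecidableEq n] :
    (Matrix n n ℂ ⊗[ℂ] (Matrix n n ℂ)ᵐᵒᵖ) →ₗ[ℂ] Matrix n n ℂ →ₗ[ℂ] Matrix n n ℂ :=
  TensorProduct.lift
  { toFun := fun x =>
      { toFun := fun y =>
          (LinearMap.mulLeft ℂ x).comp (LinearMap.mulRight ℂ (unop y))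
        map_add' := fun y₁ y₂ => by ext T; simp [Matrix.mul_add]
        map_smul' := fun c y => by ext T; simp [Matrix.mul_smul] }
    map_add' := fun x₁ x₂ => by ext y T; simp [Matrix.add_mul]
    map_smul' := fun c x => by ext y T; simp [smul_mul_assoc] }

lemma PhiFull_tmul {n : Type*} [Fintype n] [DecidableEq n]
    (x : Matrix n n ℂ) (y : (Matrix n n ℂ)ᵐᵒᵖ) (T : Matrix n n ℂ) :
    PhiFull n (x ⊗ₜ y) T = x * T * unop y := by
  simp [PhiFull, mul_assoc]

noncomputable def PsiFull (n : Type*) [Fintype n] [DecidableEq n] :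
    (Matrix n n ℂ →ₗ[ℂ] Matrix n n ℂ) →ₗ[ℂ] (Matrix n n ℂ ⊗[ℂ] (Matrix n n ℂ)ᵐᵒᵖ) where
  toFun f := ∑ i, ∑ j, ∑ k, ∑ l,
    (f (Matrix.single j k (1:ℂ))) i l • (Matrix.single i j (1:ℂ) ⊗ₜ[ℂ] op (Matrix.single k l (1:ℂ)))
  map_add' f g := by simp [add_smul, Finset.sum_add_distrib]
  map_smul' c f := by simp [smul_smul, Finset.smul_sum]

lemma coeff_aux {n : Type*} [Fintype n] [DecidableEq n]
    (x y : Matrix n n ℂ) (i j k l : n) :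
    (x * Matrix.single j k (1:ℂ) * y) i l = x i j * y k l := by
  simp [Matrix.mul_apply, Matrix.single, Finset.sum_ite_eq, ite_and]

lemma matrix_eq_sum_smul {n : Type*} [Fintype n] [DecidableEq n] (x : Matrix n n ℂ) :
    x = ∑ i, ∑ j, x i j • Matrix.single i j (1:ℂ) := by
  conv_lhs => rw [matrix_eq_sum_single x]
  simp only [smul_single, smul_eq_mul, mul_one]

lemma PsiFull_PhiFull {n : Type*} [Fintype n] [DecidableEq n]
    (z : Matrix n n ℂ ⊗[ℂ] (Matrix n n ℂ)ᵐᵒᵖ) : PsiFull n (PhiFull n z) = z := by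
  induction z using TensorProduct.induction_on with
  | zero => simp
  | add a b ha hb => simp only [map_add, ha, hb]
  | tmul x y =>
    show (∑ i, ∑ j, ∑ k, ∑ l, _) = _
    conv_rhs => rw [← op_unop y, matrix_eq_sum_smul x, matrix_eq_sum_smul (unop y)]
    simp only [PhiFull_tmul, coeff_aux, Finset.op_sum, sum_tmul, tmul_sum,
      op_smul, smul_tmul', tmul_smul, smul_smul, Finset.smul_sum]
    conv_rhs => enter [2, a]; rw [Finset.sum_comm]
    conv_rhs => rw [Finset.sum_comm]
    conv_rhs => enter [2, c, 2, a]; rw [Finset.sum_comm]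
    conv_rhs => enter [2, c]; rw [Finset.sum_comm]
    simp only [mul_comm]

lemma PhiFull_injective {n : Type*} [Fintype n] [DecidableEq n] :
    Function.Injective (PhiFull n) :=
  Function.LeftInverse.injective (g := PsiFull n) PsiFull_PhiFull

lemma PhiOp_tmul {n : Type*} [Fintype n] [DecidableEq n] (M : Subalgebra ℂ (Matrix n n ℂ))
    (x : ↥M) (y : (↥M)ᵐᵒᵖ) (T : Matrix n n ℂ) :
    PhiOp M (x ⊗ₜ y) T = (x : Matrix n n ℂ) * T * ((unop y : ↥M) : Matrix n n ℂ) := by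
  simp [PhiOp, mul_assoc]

noncomputable def inclOp {n : Type*} [Fintype n] [DecidableEq n]
    (M : Subalgebra ℂ (Matrix n n ℂ)) : (↥M)ᵐᵒᵖ →ₗ[ℂ] (Matrix n n ℂ)ᵐᵒᵖ :=
  (opLinearEquiv ℂ).toLinearMap ∘ₗ M.val.toLinearMap ∘ₗ (opLinearEquiv ℂ).symm.toLinearMap

lemma PhiOp_eq {n : Type*} [Fintype n] [DecidableEq n] (M : Subalgebra ℂ (Matrix n n ℂ)) :
    PhiOp M = (PhiFull n).comp (TensorProduct.map M.val.toLinearMap (inclOp M)) := by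
  apply TensorProduct.ext'
  intro x y
  ext T
  simp [PhiOp_tmul, PhiFull_tmul, inclOp, mul_assoc]

lemma PhiOp_injective {n : Type*} [Fintype n] [DecidableEq n]
    (M : Subalgebra ℂ (Matrix n n ℂ)) : Function.Injective (PhiOp M) := by
  rw [PhiOp_eq]
  simp only [LinearMap.coe_comp]
  refine Function.Injective.comp PhiFull_injective ?_
  rw [← LinearMap.lTensor_comp_rTensor, LinearMap.coe_comp]
  refine Function.Injective.comp ?_ ?_
  · refine Module.Flat.lTensor_preserves_injective_linearMap (inclOp M) ?_
    intro a b hab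
    have h : ((unop a : ↥M) : Matrix n n ℂ) = ((unop b : ↥M) : Matrix n n ℂ) := by
      simpa [inclOp] using congrArg unop hab
    exact unop_injective (Subtype.ext h)
  · exact Module.Flat.rTensor_preserves_injective_linearMap M.val.toLinearMap
      fun a b hab => Subtype.ext hab

lemma PhiOp_mul {n : Type*} [Fintype n] [DecidableEq n] (M : Subalgebra ℂ (Matrix n n ℂ))
    (z w : ↥M ⊗[ℂ] (↥M)ᵐᵒᵖ) :
    PhiOp M (z * w) = (PhiOp M z).comp (PhiOp M w) := by
  induction z using TensorProduct.induction_on with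
  | zero => simp
  | add a b ha hb => simp [add_mul, ha, hb, LinearMap.add_comp]
  | tmul a b =>
    induction w using TensorProduct.induction_on with
    | zero => simp
    | add c d hc hd => simp [mul_add, hc, hd, LinearMap.comp_add]
    | tmul c d =>
      ext T
      simp [Algebra.TensorProduct.tmul_mul_tmul, PhiOp_tmul, mul_assoc]

set_option synthInstance.maxHeartbeats 1000000 in
set_option maxHeartbeats 2000000 in
/-- for an idempotent `p ∈ M ⊗ M^op` with `S := Im Φ_p` (so that
`B(H) = Im Φ_p ⊕ Ker Φ_p`), one has `Ann(S) = (M ⊗ M^op)(1 − p)` and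
`Ann(Ker Φ_p) = (M ⊗ M^op) p`, where `Ann(X) = {z : Φ_z(X) = 0}`. -/
theorem stmt_14 {n : Type*} [Fintype n] [DecidableEq n]
    (M : Subalgebra ℂ (Matrix n n ℂ)) (hMstar : ∀ a ∈ M, star a ∈ M)
    (p : ↥M ⊗[ℂ] (↥M)ᵐᵒᵖ) (hp : p * p = p) :
    {z : ↥M ⊗[ℂ] (↥M)ᵐᵒᵖ | ∀ T ∈ LinearMap.range (PhiOp M p), PhiOp M z T = 0} =
        {z : ↥M ⊗[ℂ] (↥M)ᵐᵒᵖ | ∃ w, z = w * (1 - p)} ∧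
      {z : ↥M ⊗[ℂ] (↥M)ᵐᵒᵖ | ∀ T ∈ LinearMap.ker (PhiOp M p), PhiOp M z T = 0} =
        {z : ↥M ⊗[ℂ] (↥M)ᵐᵒᵖ | ∃ w, z = w * p} := by
  have hinj := PhiOp_injective M
  have hop : (1 - p) * p = 0 := by
    have e : (1 - p) * p = 1 * p - p * p := sub_mul 1 p p
    rw [e, one_mul, hp]
    exact sub_self p
  have hpo : p * (1 - p) = 0 := by
    have e : p * (1 - p) = p * 1 - p * p := mul_sub p 1 p
    rw [e, mul_one, hp]
    exact sub_self p
  constructor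
  · ext z
    simp only [Set.mem_setOf_eq]
    constructor
    · intro hz
      refine ⟨z, ?_⟩
      have hzp : z * p = 0 := by
        apply hinj
        rw [map_zero, PhiOp_mul]
        refine LinearMap.ext fun T => ?_
        simpa using hz _ ⟨T, rfl⟩
      have h2 : z * (1 - p) = z * 1 - z * p := mul_sub z 1 p
      rw [h2, mul_one, hzp]
      exact (sub_zero z).symm
    · rintro ⟨w, rfl⟩ T ⟨T', rfl⟩
      have h0 : (w * (1 - p)) * p = 0 := by
        rw [mul_assoc, hop]
        exact mul_zero w
      have h1 : PhiOp M (w * (1 - p)) (PhiOp M p T') = PhiOp M ((w * (1 - p)) * p) T' := by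
        rw [PhiOp_mul M (w * (1 - p)) p, LinearMap.comp_apply]
      rw [h1, h0, map_zero]
      rfl
  · ext z
    simp only [Set.mem_setOf_eq]
    constructor
    · intro hz
      refine ⟨z, ?_⟩
      have e3 : (PhiOp M p).comp (PhiOp M (1 - p)) = 0 := by
        rw [← PhiOp_mul, hpo, map_zero]
      have hk : ∀ T, PhiOp M (1 - p) T ∈ LinearMap.ker (PhiOp M p) := by
        intro T
        rw [LinearMap.mem_ker]
        have := congrArg (fun f : Matrix n n ℂ →ₗ[ℂ] Matrix n n ℂ => f T) e3
        simpa using this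
      have hzp : z * (1 - p) = 0 := by
        apply hinj
        rw [map_zero, PhiOp_mul]
        refine LinearMap.ext fun T => ?_
        simpa using hz _ (hk T)
      have h2 : z * (1 - p) = z * 1 - z * p := mul_sub z 1 p
      rw [h2, mul_one] at hzp
      exact sub_eq_zero.mp hzp
    · rintro ⟨w, rfl⟩ T hT
      rw [LinearMap.mem_ker] at hT
      have h1 : PhiOp M (w * p) T = PhiOp M w (PhiOp M p T) := by
        rw [PhiOp_mul]; rfl
      rw [h1, hT, map_zero]
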